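/- Crossings + nestings = overlaps + coverings: for every partition π of [n], crop(π) + neop(π) = ov(π) + cov(π), and crin(π) + nein(π) = ovin(π) + covin(π). -/

import Mathlib

namespace Paper

/-! ### Motzkin paths, Dyck paths, and Flajolet's continued-fraction weights -/

inductive MStep : Type
  | up : MStep
  | down : MStep
  | flat : MStep
  deriving DecidableEq

instance instFintypeMStep : Fintype MStep :=
  ⟨{MStep.up, MStep.down, MStep.flat}, fun x => by cases x <;> simp⟩

noncomputable section

/-- Height increment of a single step. -/
def MStep.val : MStep → ℤ
  | .up => 1
  | .down => -1
  | .flat => 0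

/-- The height of the lattice path `ω` after its first `i` steps. -/
def height {n : ℕ} (ω : Fin n → MStep) (i : ℕ) : ℤ :=
  ∑ j ∈ Finset.univ.filter (fun j : Fin n => (j : ℕ) < i), (ω j).val

open Classical in
/-- Motzkin paths of length `n`: lattice paths from `(0,0)` to `(n,0)` with steps
`(1,1)`, `(1,-1)` and `(1,0)`, staying at heights `≥ 0`. -/
def motzkinPaths (n : ℕ) : Finset (Fin n → MStep) :=
  Finset.univ.filter fun ω =>
    (∀ i ∈ Finset.range (n + 1), 0 ≤ height ω i) ∧ height ω n = 0

/-- Dyck paths of length `n`: Motzkin paths having no level step. -/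
def dyckPaths (n : ℕ) : Finset (Fin n → MStep) :=
  (motzkinPaths n).filter fun ω => ∀ i, ω i ≠ MStep.flat

/-- The weight of a Motzkin path for the J-type continued fraction with coefficients
`γ` (one factor `γ h` for each level step at height `h`) and `β` (one factor `β h`
for each fall starting at height `h`); rises have weight `1`. -/
def jweight {R : Type*} [CommRing R] {n : ℕ} (γ β : ℕ → R) (ω : Fin n → MStep) : R :=
  ∏ i : Fin n,
    match ω i with
    | MStep.up => (1 : R)
    | MStep.down => β (height ω (i : ℕ)).toNat
    | MStep.flat => γ (height ω (i : ℕ)).toNat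

/-- The weight of a Dyck path for the S-type continued fraction with coefficients `α`
(one factor `α h` for each fall starting at height `h`); rises have weight `1`. -/
def sweight {R : Type*} [CommRing R] {n : ℕ} (α : ℕ → R) (ω : Fin n → MStep) : R :=
  ∏ i : Fin n,
    match ω i with
    | MStep.up => (1 : R)
    | MStep.down => α (height ω (i : ℕ)).toNat
    | MStep.flat => (0 : R)

/-- The `(p,q)`-integer `[m]_{p,q} = ∑_{j=0}^{m-1} p^j q^(m-1-j)`. -/
def qint {R : Type*} [CommRing R] (p q : R) (m : ℕ) : R :=
  ∑ j ∈ Finset.range m, p ^ j * q ^ (m - 1 - j)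

/-- `starSum f m = ∑_{ℓ=0}^{m} f ℓ (m-ℓ)`. -/
def starSum {R : Type*} [CommRing R] (f : ℕ → ℕ → R) (m : ℕ) : R :=
  ∑ ℓ ∈ Finset.range (m + 1), f ℓ (m - ℓ)

/-- `rowSum f m = ∑_{ℓ=0}^{m} f m ℓ`. -/
def rowSum {R : Type*} [CommRing R] (f : ℕ → ℕ → R) (m : ℕ) : R :=
  ∑ ℓ ∈ Finset.range (m + 1), f m ℓ

/-! ### Generic counting helpers -/

/-- The number of indices `i : Fin n` satisfying `P i`. -/
def cnt {n : ℕ} (P : Fin n → Prop) : ℕ := Nat.card {i : Fin n // P i}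

/-- The number of quadruplets `i < j < k < l` satisfying `C i j k l`. -/
def quad {n : ℕ} (C : Fin n → Fin n → Fin n → Fin n → Prop) : ℕ :=
  Nat.card {q : Fin n × Fin n × Fin n × Fin n //
    q.1 < q.2.1 ∧ q.2.1 < q.2.2.1 ∧ q.2.2.1 < q.2.2.2 ∧ C q.1 q.2.1 q.2.2.1 q.2.2.2}

/-- The number of triplets `i < j < l` satisfying `C i j l`. -/
def trip {n : ℕ} (C : Fin n → Fin n → Fin n → Prop) : ℕ :=
  Nat.card {q : Fin n × Fin n × Fin n // q.1 < q.2.1 ∧ q.2.1 < q.2.2 ∧ C q.1 q.2.1 q.2.2}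

/-! ### Permutation statistics -/

variable {n : ℕ}

/-- `i` is a record of `σ`. -/
def isRec (σ : Equiv.Perm (Fin n)) (i : Fin n) : Prop := ∀ j, j < i → σ j < σ i

/-- `i` is an antirecord of `σ`. -/
def isArec (σ : Equiv.Perm (Fin n)) (i : Fin n) : Prop := ∀ j, i < j → σ i < σ j

/-- `i` is an exclusive record of `σ`. -/
def isERec (σ : Equiv.Perm (Fin n)) (i : Fin n) : Prop := isRec σ i ∧ ¬ isArec σ i

/-- `i` is an exclusive antirecord of `σ`. -/
def isEArec (σ : Equiv.Perm (Fin n)) (i : Fin n) : Prop := isArec σ i ∧ ¬ isRec σ i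

/-- `i` is a neither-record-antirecord of `σ`. -/
def isNrar (σ : Equiv.Perm (Fin n)) (i : Fin n) : Prop := ¬ isRec σ i ∧ ¬ isArec σ i

/-- `i` is a cycle valley of `σ`. -/
def isCval (σ : Equiv.Perm (Fin n)) (i : Fin n) : Prop := i < σ i ∧ i < σ⁻¹ i

/-- `i` is a cycle peak of `σ`. -/
def isCpeak (σ : Equiv.Perm (Fin n)) (i : Fin n) : Prop := σ i < i ∧ σ⁻¹ i < i

/-- `i` is a cycle double rise of `σ`. -/
def isCdrise (σ : Equiv.Perm (Fin n)) (i : Fin n) : Prop := σ⁻¹ i < i ∧ i < σ i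

/-- `i` is a cycle double fall of `σ`. -/
def isCdfall (σ : Equiv.Perm (Fin n)) (i : Fin n) : Prop := σ i < i ∧ i < σ⁻¹ i

/-- `i` is a fixed point of `σ`. -/
def isFix (σ : Equiv.Perm (Fin n)) (i : Fin n) : Prop := σ i = i

instance (σ : Equiv.Perm (Fin n)) : DecidablePred (isCval σ) := fun i =>
  inferInstanceAs (Decidable (i < σ i ∧ i < σ⁻¹ i))

instance (σ : Equiv.Perm (Fin n)) : DecidablePred (isCpeak σ) := fun i =>
  inferInstanceAs (Decidable (σ i < i ∧ σ⁻¹ i < i))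

instance (σ : Equiv.Perm (Fin n)) : DecidablePred (isCdrise σ) := fun i =>
  inferInstanceAs (Decidable (σ⁻¹ i < i ∧ i < σ i))

instance (σ : Equiv.Perm (Fin n)) : DecidablePred (isCdfall σ) := fun i =>
  inferInstanceAs (Decidable (σ i < i ∧ i < σ⁻¹ i))

instance (σ : Equiv.Perm (Fin n)) : DecidablePred (isFix σ) := fun i =>
  inferInstanceAs (Decidable (σ i = i))

/-- The number of excedances of `σ`. -/
def exc (σ : Equiv.Perm (Fin n)) : ℕ := cnt fun i => i < σ i

/-- The number of antirecords of `σ`. -/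
def arec (σ : Equiv.Perm (Fin n)) : ℕ := cnt (isArec σ)

/-- The number of exclusive records of `σ`. -/
def erec (σ : Equiv.Perm (Fin n)) : ℕ := cnt (isERec σ)

/-- The number of inversions of `σ`. -/
def inversions (σ : Equiv.Perm (Fin n)) : ℕ :=
  Nat.card {p : Fin n × Fin n // p.1 < p.2 ∧ σ p.2 < σ p.1}

/-- The number of cycles of `σ` (fixed points included). -/
def cyc (σ : Equiv.Perm (Fin n)) : ℕ := σ.cycleType.card + cnt (isFix σ)

/-- The level of an index `i`: `#{j < i : σ j > i}`. -/
def levAt (σ : Equiv.Perm (Fin n)) (i : Fin n) : ℕ := cnt fun j => j < i ∧ i < σ j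

def eareccpeak (σ : Equiv.Perm (Fin n)) : ℕ := cnt fun i => isEArec σ i ∧ isCpeak σ i
def eareccdfall (σ : Equiv.Perm (Fin n)) : ℕ := cnt fun i => isEArec σ i ∧ isCdfall σ i
def ereccval (σ : Equiv.Perm (Fin n)) : ℕ := cnt fun i => isERec σ i ∧ isCval σ i
def ereccdrise (σ : Equiv.Perm (Fin n)) : ℕ := cnt fun i => isERec σ i ∧ isCdrise σ i
def nrcpeak (σ : Equiv.Perm (Fin n)) : ℕ := cnt fun i => isNrar σ i ∧ isCpeak σ i
def nrcdfall (σ : Equiv.Perm (Fin n)) : ℕ := cnt fun i => isNrar σ i ∧ isCdfall σ i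
def nrcval (σ : Equiv.Perm (Fin n)) : ℕ := cnt fun i => isNrar σ i ∧ isCval σ i
def nrcdrise (σ : Equiv.Perm (Fin n)) : ℕ := cnt fun i => isNrar σ i ∧ isCdrise σ i

/-- The number of upper crossings of `σ`. -/
def ucross (σ : Equiv.Perm (Fin n)) : ℕ := quad fun i j k l => σ i = k ∧ σ j = l
/-- The number of lower crossings of `σ`. -/
def lcross (σ : Equiv.Perm (Fin n)) : ℕ := quad fun i j k l => σ k = i ∧ σ l = j
/-- The number of upper nestings of `σ`. -/
def unest (σ : Equiv.Perm (Fin n)) : ℕ := quad fun i j k l => σ i = l ∧ σ j = k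
/-- The number of lower nestings of `σ`. -/
def lnest (σ : Equiv.Perm (Fin n)) : ℕ := quad fun i j k l => σ l = i ∧ σ k = j
/-- The number of upper joinings of `σ`. -/
def ujoin (σ : Equiv.Perm (Fin n)) : ℕ := trip fun i j l => σ i = j ∧ σ j = l
/-- The number of lower joinings of `σ`. -/
def ljoin (σ : Equiv.Perm (Fin n)) : ℕ := trip fun i j l => σ j = i ∧ σ l = j
/-- The number of upper pseudo-nestings of `σ`. -/
def upsnest (σ : Equiv.Perm (Fin n)) : ℕ := trip fun i j l => σ j = j ∧ σ i = l
/-- The number of lower pseudo-nestings of `σ`. -/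
def lpsnest (σ : Equiv.Perm (Fin n)) : ℕ := trip fun i j l => σ j = j ∧ σ l = i
/-- `psnest = upsnest (= lpsnest)`. -/
def psnest (σ : Equiv.Perm (Fin n)) : ℕ := upsnest σ

def ucrosscval (σ : Equiv.Perm (Fin n)) : ℕ :=
  quad fun i j k l => σ i = k ∧ σ j = l ∧ j < σ⁻¹ j
def ucrosscdrise (σ : Equiv.Perm (Fin n)) : ℕ :=
  quad fun i j k l => σ i = k ∧ σ j = l ∧ σ⁻¹ j < j
def lcrosscpeak (σ : Equiv.Perm (Fin n)) : ℕ :=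
  quad fun i j k l => σ k = i ∧ σ l = j ∧ σ⁻¹ k < k
def lcrosscdfall (σ : Equiv.Perm (Fin n)) : ℕ :=
  quad fun i j k l => σ k = i ∧ σ l = j ∧ k < σ⁻¹ k
def unestcval (σ : Equiv.Perm (Fin n)) : ℕ :=
  quad fun i j k l => σ i = l ∧ σ j = k ∧ j < σ⁻¹ j
def unestcdrise (σ : Equiv.Perm (Fin n)) : ℕ :=
  quad fun i j k l => σ i = l ∧ σ j = k ∧ σ⁻¹ j < j
def lnestcpeak (σ : Equiv.Perm (Fin n)) : ℕ :=
  quad fun i j k l => σ l = i ∧ σ k = j ∧ σ⁻¹ k < k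
def lnestcdfall (σ : Equiv.Perm (Fin n)) : ℕ :=
  quad fun i j k l => σ l = i ∧ σ k = j ∧ k < σ⁻¹ k

/-- `ucross (j, σ) = #{i<j<k<l : k = σ i, l = σ j}`. -/
def ucrossAt (σ : Equiv.Perm (Fin n)) (j : Fin n) : ℕ :=
  Nat.card {t : Fin n × Fin n × Fin n //
    t.1 < j ∧ j < t.2.1 ∧ t.2.1 < t.2.2 ∧ σ t.1 = t.2.1 ∧ σ j = t.2.2}

/-- `unest (j, σ) = #{i<j<k<l : k = σ j, l = σ i}`. -/
def unestAt (σ : Equiv.Perm (Fin n)) (j : Fin n) : ℕ :=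
  Nat.card {t : Fin n × Fin n × Fin n //
    t.1 < j ∧ j < t.2.1 ∧ t.2.1 < t.2.2 ∧ σ j = t.2.1 ∧ σ t.1 = t.2.2}

/-- `lcross (k, σ) = #{i<j<k<l : i = σ k, j = σ l}`. -/
def lcrossAt (σ : Equiv.Perm (Fin n)) (k : Fin n) : ℕ :=
  Nat.card {t : Fin n × Fin n × Fin n //
    t.1 < t.2.1 ∧ t.2.1 < k ∧ k < t.2.2 ∧ σ k = t.1 ∧ σ t.2.2 = t.2.1}

/-- `lnest (k, σ) = #{i<j<k<l : i = σ l, j = σ k}`. -/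
def lnestAt (σ : Equiv.Perm (Fin n)) (k : Fin n) : ℕ :=
  Nat.card {t : Fin n × Fin n × Fin n //
    t.1 < t.2.1 ∧ t.2.1 < k ∧ k < t.2.2 ∧ σ t.2.2 = t.1 ∧ σ k = t.2.1}

/-! ### Set-partition statistics -/

open Classical in
/-- The set partitions of `{1, …, n}`, encoded as the collections of their blocks. -/
def setPartitions (n : ℕ) : Finset (Finset (Finset (Fin n))) :=
  Finset.univ.filter fun P =>
    (∀ B ∈ P, B.Nonempty) ∧ (∀ i : Fin n, ∃ B ∈ P, i ∈ B) ∧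
      ∀ B ∈ P, ∀ C ∈ P, ∀ i : Fin n, i ∈ B → i ∈ C → B = C

/-- `(i, j)` is an edge of the graph `G_P`: `i < j` are consecutive elements of a
common block of `P`. -/
def arc (P : Finset (Finset (Fin n))) (i j : Fin n) : Prop :=
  i < j ∧ ∃ B ∈ P, i ∈ B ∧ j ∈ B ∧ ∀ k ∈ B, ¬(i < k ∧ k < j)

instance (P : Finset (Finset (Fin n))) (i j : Fin n) : Decidable (arc P i j) :=
  inferInstanceAs
    (Decidable (i < j ∧ ∃ B ∈ P, i ∈ B ∧ j ∈ B ∧ ∀ k ∈ B, ¬(i < k ∧ k < j)))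

/-- `i` is an opener: the smallest element of a block of size `≥ 2`. -/
def isOpener (P : Finset (Finset (Fin n))) (i : Fin n) : Prop :=
  ∃ B ∈ P, i ∈ B ∧ 2 ≤ B.card ∧ ∀ j ∈ B, i ≤ j

/-- `i` is a closer: the largest element of a block of size `≥ 2`. -/
def isCloser (P : Finset (Finset (Fin n))) (i : Fin n) : Prop :=
  ∃ B ∈ P, i ∈ B ∧ 2 ≤ B.card ∧ ∀ j ∈ B, j ≤ i

/-- `i` is an insider: a non-smallest, non-largest element of a block of size `≥ 3`. -/
def isInsider (P : Finset (Finset (Fin n))) (i : Fin n) : Prop :=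
  ∃ B ∈ P, i ∈ B ∧ 3 ≤ B.card ∧ (∃ j ∈ B, j < i) ∧ ∃ j ∈ B, i < j

/-- `i` is a singleton of `P`. -/
def isSingle (P : Finset (Finset (Fin n))) (i : Fin n) : Prop := {i} ∈ P

instance (P : Finset (Finset (Fin n))) : DecidablePred (isOpener P) := fun i =>
  inferInstanceAs (Decidable (∃ B ∈ P, i ∈ B ∧ 2 ≤ B.card ∧ ∀ j ∈ B, i ≤ j))

instance (P : Finset (Finset (Fin n))) : DecidablePred (isCloser P) := fun i =>
  inferInstanceAs (Decidable (∃ B ∈ P, i ∈ B ∧ 2 ≤ B.card ∧ ∀ j ∈ B, j ≤ i))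

instance (P : Finset (Finset (Fin n))) : DecidablePred (isInsider P) := fun i =>
  inferInstanceAs
    (Decidable (∃ B ∈ P, i ∈ B ∧ 3 ≤ B.card ∧ (∃ j ∈ B, j < i) ∧ ∃ j ∈ B, i < j))

instance (P : Finset (Finset (Fin n))) : DecidablePred (isSingle P) := fun i =>
  inferInstanceAs (Decidable ({i} ∈ P))

/-- `i` is an exclusive record of the set partition `P`: `i` has a next-larger
element `l` in its block, and for every `j < i` the next-larger element of `j` in its
block (when it exists) is smaller than `l`. -/
def isERecP (P : Finset (Finset (Fin n))) (i : Fin n) : Prop :=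
  ∃ l, arc P i l ∧ ∀ j, j < i → ∀ m, arc P j m → m < l

/-- The number of exclusive records of `P`. -/
def perecP (P : Finset (Finset (Fin n))) : ℕ := cnt (isERecP P)

/-- The number of singletons of `P`. -/
def singCount (P : Finset (Finset (Fin n))) : ℕ := cnt (isSingle P)

/-- The number of blocks of `P` of size `≥ 2`. -/
def blkCount (P : Finset (Finset (Fin n))) : ℕ :=
  Nat.card {B : Finset (Fin n) // B ∈ P ∧ 2 ≤ B.card}

def erecinP (P : Finset (Finset (Fin n))) : ℕ := cnt fun i => isInsider P i ∧ isERecP P i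
def erecopP (P : Finset (Finset (Fin n))) : ℕ := cnt fun i => isOpener P i ∧ isERecP P i
def nerecinP (P : Finset (Finset (Fin n))) : ℕ :=
  cnt fun i => isInsider P i ∧ ¬ isERecP P i
def nerecopP (P : Finset (Finset (Fin n))) : ℕ :=
  cnt fun i => isOpener P i ∧ ¬ isERecP P i

/-- `cr (j, P) = #{i<j<k<l : (i,k) ∈ G_P and (j,l) ∈ G_P}`. -/
def crAt (P : Finset (Finset (Fin n))) (j : Fin n) : ℕ :=
  Nat.card {t : Fin n × Fin n × Fin n //
    t.1 < j ∧ j < t.2.1 ∧ t.2.1 < t.2.2 ∧ arc P t.1 t.2.1 ∧ arc P j t.2.2}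

/-- `ne (j, P) = #{i<j<k<l : (i,l) ∈ G_P and (j,k) ∈ G_P}`. -/
def neAt (P : Finset (Finset (Fin n))) (j : Fin n) : ℕ :=
  Nat.card {t : Fin n × Fin n × Fin n //
    t.1 < j ∧ j < t.2.1 ∧ t.2.1 < t.2.2 ∧ arc P t.1 t.2.2 ∧ arc P j t.2.1}

/-- `qne (j, P) = #{i<j<l : (i,l) ∈ G_P}`. -/
def qneAt (P : Finset (Finset (Fin n))) (j : Fin n) : ℕ :=
  Nat.card {p : Fin n × Fin n // p.1 < j ∧ j < p.2 ∧ arc P p.1 p.2}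

/-- The total number of crossings of `P`. -/
def crP (P : Finset (Finset (Fin n))) : ℕ := quad fun i j k l => arc P i k ∧ arc P j l
/-- The number of crossings of `P` whose second index is an opener. -/
def cropP (P : Finset (Finset (Fin n))) : ℕ :=
  quad fun i j k l => arc P i k ∧ arc P j l ∧ isOpener P j
/-- The number of crossings of `P` whose second index is an insider. -/
def crinP (P : Finset (Finset (Fin n))) : ℕ :=
  quad fun i j k l => arc P i k ∧ arc P j l ∧ isInsider P j
/-- The number of nestings of `P` whose second index is an opener. -/
def neopP (P : Finset (Finset (Fin n))) : ℕ :=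
  quad fun i j k l => arc P i l ∧ arc P j k ∧ isOpener P j
/-- The number of nestings of `P` whose second index is an insider. -/
def neinP (P : Finset (Finset (Fin n))) : ℕ :=
  quad fun i j k l => arc P i l ∧ arc P j k ∧ isInsider P j
/-- The number of pseudo-nestings of `P`. -/
def psneP (P : Finset (Finset (Fin n))) : ℕ :=
  trip fun i j l => isSingle P j ∧ arc P i l

/-- The smallest element of a block, as a natural number. -/
def bmin (B : Finset (Fin n)) : ℕ := sInf {m : ℕ | ∃ i ∈ B, (i : ℕ) = m}

/-- The largest element of a block, as a natural number. -/
def bmax (B : Finset (Fin n)) : ℕ := B.sup fun i => (i : ℕ)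

/-- `ov (j, P) = #{(B₁,B₂) : j ∈ B₂, min B₁ < j < max B₁ < max B₂}`. -/
def ovAt (P : Finset (Finset (Fin n))) (j : Fin n) : ℕ :=
  Nat.card {p : Finset (Fin n) × Finset (Fin n) // p.1 ∈ P ∧ p.2 ∈ P ∧ j ∈ p.2 ∧
    bmin p.1 < (j : ℕ) ∧ (j : ℕ) < bmax p.1 ∧ bmax p.1 < bmax p.2}

/-- `cov (j, P) = #{(B₁,B₂) : j ∈ B₂, min B₁ < j < max B₂ < max B₁}`. -/
def covAt (P : Finset (Finset (Fin n))) (j : Fin n) : ℕ :=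
  Nat.card {p : Finset (Fin n) × Finset (Fin n) // p.1 ∈ P ∧ p.2 ∈ P ∧ j ∈ p.2 ∧
    bmin p.1 < (j : ℕ) ∧ (j : ℕ) < bmax p.2 ∧ bmax p.2 < bmax p.1}

/-- The number of overlaps of `P`: pairs of blocks with
`min B₁ < min B₂ < max B₁ < max B₂`. -/
def ovP (P : Finset (Finset (Fin n))) : ℕ :=
  Nat.card {p : Finset (Fin n) × Finset (Fin n) // p.1 ∈ P ∧ p.2 ∈ P ∧
    bmin p.1 < bmin p.2 ∧ bmin p.2 < bmax p.1 ∧ bmax p.1 < bmax p.2}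

/-- The number of coverings of `P`: pairs of blocks with
`min B₁ < min B₂ < max B₂ < max B₁`. -/
def covP (P : Finset (Finset (Fin n))) : ℕ :=
  Nat.card {p : Finset (Fin n) × Finset (Fin n) // p.1 ∈ P ∧ p.2 ∈ P ∧
    bmin p.1 < bmin p.2 ∧ bmin p.2 < bmax p.2 ∧ bmax p.2 < bmax p.1}

/-- The number of pseudo-coverings of `P`: pairs of blocks with
`min B₁ < min B₂ = max B₂ < max B₁`. -/
def pscovP (P : Finset (Finset (Fin n))) : ℕ :=
  Nat.card {p : Finset (Fin n) × Finset (Fin n) // p.1 ∈ P ∧ p.2 ∈ P ∧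
    bmin p.1 < bmin p.2 ∧ bmin p.2 = bmax p.2 ∧ bmax p.2 < bmax p.1}

/-- `ovin P = ∑_{j insider} ov (j, P)`. -/
def ovinP (P : Finset (Finset (Fin n))) : ℕ :=
  ∑ j ∈ Finset.univ.filter (isInsider P), ovAt P j

/-- `covin P = ∑_{j insider} cov (j, P)`. -/
def covinP (P : Finset (Finset (Fin n))) : ℕ :=
  ∑ j ∈ Finset.univ.filter (isInsider P), covAt P j

/-- The intertwining number of two (disjoint nonempty) blocks `B`, `C`: the number of
pairs `(b,c) ∈ B × C` with no element of `B ∪ C` strictly between `b` and `c`. -/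
def iota (B C : Finset (Fin n)) : ℕ :=
  Nat.card {p : Fin n × Fin n // p.1 ∈ B ∧ p.2 ∈ C ∧
    ∀ k ∈ B ∪ C, ¬(min p.1 p.2 < k ∧ k < max p.1 p.2)}

/-- The intertwining number of a set partition: the sum of `iota B₁ B₂` over the
unordered pairs of distinct blocks, here enumerated by increasing minimum. -/
def iotaTotal (P : Finset (Finset (Fin n))) : ℕ :=
  ∑ B₁ ∈ P, ∑ B₂ ∈ P, if bmin B₁ < bmin B₂ then iota B₁ B₂ else 0

end

section Aux

open Finset

variable {n : ℕ} {P : Finset (Finset (Fin n))} {B C : Finset (Fin n)} {i j l : Fin n}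

/-- The block containing `i` (junk value `∅` if none). -/
noncomputable def blockOf (P : Finset (Finset (Fin n))) (i : Fin n) : Finset (Fin n) :=
  if h : ∃ B ∈ P, i ∈ B then h.choose else ∅

/-- The next element of `B` after `j` (junk value `j` if none). -/
noncomputable def nxt (B : Finset (Fin n)) (j : Fin n) : Fin n :=
  if h : (B.filter fun x => j < x).Nonempty then (B.filter fun x => j < x).min' h else j

/-- The previous element of `B` before `j` (junk value `j` if none). -/
noncomputable def prv (B : Finset (Fin n)) (j : Fin n) : Fin n :=
  if h : (B.filter fun x => x < j).Nonempty then (B.filter fun x => x < j).max' h else j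

lemma blockOf_eq (hdisj : ∀ B ∈ P, ∀ C ∈ P, ∀ i : Fin n, i ∈ B → i ∈ C → B = C)
    (hB : B ∈ P) (hi : i ∈ B) : blockOf P i = B := by
  have h : ∃ B ∈ P, i ∈ B := ⟨B, hB, hi⟩
  rw [blockOf, dif_pos h]
  exact hdisj _ h.choose_spec.1 _ hB _ h.choose_spec.2 hi

lemma bmin_le (hi : i ∈ B) : bmin B ≤ (i : ℕ) := Nat.sInf_le ⟨i, hi, rfl⟩

lemma exists_bmin (h : B.Nonempty) : ∃ i ∈ B, (i : ℕ) = bmin B := by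
  obtain ⟨x, hx⟩ := h
  have hs : {m : ℕ | ∃ i ∈ B, (i : ℕ) = m}.Nonempty := ⟨(x : ℕ), ⟨x, hx, rfl⟩⟩
  exact Nat.sInf_mem hs

lemma le_bmax (hi : i ∈ B) : (i : ℕ) ≤ bmax B := Finset.le_sup hi

lemma exists_bmax (h : B.Nonempty) : ∃ i ∈ B, (i : ℕ) = bmax B := by
  obtain ⟨b, hb, he⟩ := Finset.exists_mem_eq_sup B h (fun i : Fin n => (i : ℕ))
  exact ⟨b, hb, he.symm⟩

lemma eq_of_bmax_eq (hdisj : ∀ B ∈ P, ∀ C ∈ P, ∀ i : Fin n, i ∈ B → i ∈ C → B = C)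
    (hB : B ∈ P) (hC : C ∈ P) (hBne : B.Nonempty) (hCne : C.Nonempty)
    (h : bmax B = bmax C) : B = C := by
  obtain ⟨b, hb, hb'⟩ := exists_bmax hBne
  obtain ⟨c, hc, hc'⟩ := exists_bmax hCne
  have hbc : b = c := Fin.ext (by omega)
  exact hdisj B hB C hC b hb (hbc ▸ hc)

lemma nxt_mem_arc (hB : B ∈ P) (hj : j ∈ B) (hx : ∃ x ∈ B, j < x) :
    nxt B j ∈ B ∧ j < nxt B j ∧ arc P j (nxt B j) := by
  obtain ⟨x, hxB, hjx⟩ := hx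
  have hne : (B.filter fun y => j < y).Nonempty := ⟨x, mem_filter.2 ⟨hxB, hjx⟩⟩
  rw [nxt, dif_pos hne]
  have hmmem := Finset.min'_mem _ hne
  rw [mem_filter] at hmmem
  refine ⟨hmmem.1, hmmem.2, hmmem.2, B, hB, hj, hmmem.1, ?_⟩
  rintro k hk ⟨hk1, hk2⟩
  have hmemk : k ∈ B.filter fun y => j < y := mem_filter.2 ⟨hk, hk1⟩
  exact absurd (Finset.min'_le _ k hmemk) (not_le.2 hk2)

lemma arc_eq_nxt (hdisj : ∀ B ∈ P, ∀ C ∈ P, ∀ i : Fin n, i ∈ B → i ∈ C → B = C)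
    (hB : B ∈ P) (hj : j ∈ B) (h : arc P j l) : l ∈ B ∧ nxt B j = l := by
  obtain ⟨hjl, B', hB', hjB', hlB', hbet⟩ := h
  have hBB : B' = B := hdisj B' hB' B hB j hjB' hj
  subst hBB
  have hne : (B'.filter fun y => j < y).Nonempty := ⟨l, mem_filter.2 ⟨hlB', hjl⟩⟩
  refine ⟨hlB', ?_⟩
  rw [nxt, dif_pos hne]
  have hmmem := Finset.min'_mem _ hne
  rw [mem_filter] at hmmem
  have hmeml : l ∈ B'.filter fun y => j < y := mem_filter.2 ⟨hlB', hjl⟩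
  have h1 := Finset.min'_le _ l hmeml
  rcases lt_or_eq_of_le h1 with h2 | h2
  · exact absurd ⟨hmmem.2, h2⟩ (hbet _ hmmem.1)
  · exact h2

lemma arc_up_unique (hdisj : ∀ B ∈ P, ∀ C ∈ P, ∀ i : Fin n, i ∈ B → i ∈ C → B = C)
    {l l' : Fin n} (h : arc P j l) (h' : arc P j l') : l = l' := by
  obtain ⟨_, B, hB, hjB, _, _⟩ := id h
  have e1 := (arc_eq_nxt hdisj hB hjB h).2
  have e2 := (arc_eq_nxt hdisj hB hjB h').2
  rw [← e1, ← e2]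

lemma span_arc (hB : B ∈ P) (hjB : j ∉ B) (hlo : ∃ a ∈ B, a < j) (hhi : ∃ b ∈ B, j < b) :
    prv B j ∈ B ∧ prv B j < j ∧ j < nxt B j ∧ nxt B j ∈ B ∧ arc P (prv B j) (nxt B j) := by
  obtain ⟨a, haB, haj⟩ := hlo
  obtain ⟨b, hbB, hjb⟩ := hhi
  have hneL : (B.filter fun x => x < j).Nonempty := ⟨a, mem_filter.2 ⟨haB, haj⟩⟩
  have hneR : (B.filter fun x => j < x).Nonempty := ⟨b, mem_filter.2 ⟨hbB, hjb⟩⟩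
  rw [prv, dif_pos hneL, nxt, dif_pos hneR]
  have hp := Finset.max'_mem _ hneL; rw [mem_filter] at hp
  have hq := Finset.min'_mem _ hneR; rw [mem_filter] at hq
  refine ⟨hp.1, hp.2, hq.2, hq.1, lt_trans hp.2 hq.2, B, hB, hp.1, hq.1, ?_⟩
  rintro k hk ⟨hk1, hk2⟩
  rcases lt_trichotomy k j with h | h | h
  · have hmemk : k ∈ B.filter fun x => x < j := mem_filter.2 ⟨hk, h⟩
    exact absurd (Finset.le_max' _ k hmemk) (not_le.2 hk1)
  · exact hjB (h ▸ hk)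
  · have hmemk : k ∈ B.filter fun x => j < x := mem_filter.2 ⟨hk, h⟩
    exact absurd (Finset.min'_le _ k hmemk) (not_le.2 hk2)

lemma span_unique (hdisj : ∀ B ∈ P, ∀ C ∈ P, ∀ i : Fin n, i ∈ B → i ∈ C → B = C)
    {x y : Fin n} (hB : B ∈ P) (h : arc P x y) (hxB : x ∈ B) (hxj : x < j) (hjy : j < y) :
    prv B j = x ∧ nxt B j = y := by
  obtain ⟨hxy, B', hB', hxB', hyB', hbet⟩ := h
  have hBB : B' = B := hdisj B' hB' B hB x hxB' hxB
  subst hBB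
  have hneL : (B'.filter fun z => z < j).Nonempty := ⟨x, mem_filter.2 ⟨hxB', hxj⟩⟩
  have hneR : (B'.filter fun z => j < z).Nonempty := ⟨y, mem_filter.2 ⟨hyB', hjy⟩⟩
  constructor
  · rw [prv, dif_pos hneL]
    have hp := Finset.max'_mem _ hneL; rw [mem_filter] at hp
    have hmemx : x ∈ B'.filter fun z => z < j := mem_filter.2 ⟨hxB', hxj⟩
    have h1 := Finset.le_max' _ x hmemx
    rcases lt_or_eq_of_le h1 with h2 | h2
    · exact absurd ⟨h2, lt_trans hp.2 hjy⟩ (hbet _ hp.1)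
    · exact h2.symm
  · rw [nxt, dif_pos hneR]
    have hq := Finset.min'_mem _ hneR; rw [mem_filter] at hq
    have hmemy : y ∈ B'.filter fun z => j < z := mem_filter.2 ⟨hyB', hjy⟩
    have h1 := Finset.min'_le _ y hmemy
    rcases lt_or_eq_of_le h1 with h2 | h2
    · exact absurd ⟨lt_trans hxj hq.2, h2⟩ (hbet _ hq.1)
    · exact h2

lemma ncard_subtype {α : Type*} [Fintype α] (p : α → Prop) [DecidablePred p] :
    Nat.card {x // p x} = (Finset.univ.filter p).card := by
  simp [Nat.card_eq_fintype_card, Fintype.card_subtype]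

/-- The key pointwise identity: `crAt j + neAt j = ovAt j + covAt j`. -/
lemma key_at (hne : ∀ B ∈ P, B.Nonempty)
    (hdisj : ∀ B ∈ P, ∀ C ∈ P, ∀ i : Fin n, i ∈ B → i ∈ C → B = C) (j : Fin n) :
    crAt P j + neAt P j = ovAt P j + covAt P j := by
  classical
  rw [crAt, neAt, ovAt, covAt, ncard_subtype, ncard_subtype, ncard_subtype, ncard_subtype]
  have hd1 : Disjoint
      (Finset.univ.filter fun t : Fin n × Fin n × Fin n =>
        t.1 < j ∧ j < t.2.1 ∧ t.2.1 < t.2.2 ∧ arc P t.1 t.2.1 ∧ arc P j t.2.2)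
      (Finset.univ.filter fun t : Fin n × Fin n × Fin n =>
        t.1 < j ∧ j < t.2.1 ∧ t.2.1 < t.2.2 ∧ arc P t.1 t.2.2 ∧ arc P j t.2.1) := by
    rw [Finset.disjoint_left]
    intro t ht ht'
    rw [mem_filter] at ht ht'
    have := arc_up_unique hdisj ht.2.2.2.2.2 ht'.2.2.2.2.2
    exact absurd this (ne_of_gt ht.2.2.2.1)
  have hd2 : Disjoint
      (Finset.univ.filter fun p : Finset (Fin n) × Finset (Fin n) =>
        p.1 ∈ P ∧ p.2 ∈ P ∧ j ∈ p.2 ∧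
        bmin p.1 < (j : ℕ) ∧ (j : ℕ) < bmax p.1 ∧ bmax p.1 < bmax p.2)
      (Finset.univ.filter fun p : Finset (Fin n) × Finset (Fin n) =>
        p.1 ∈ P ∧ p.2 ∈ P ∧ j ∈ p.2 ∧
        bmin p.1 < (j : ℕ) ∧ (j : ℕ) < bmax p.2 ∧ bmax p.2 < bmax p.1) := by
    rw [Finset.disjoint_left]
    intro p hp hp'
    rw [mem_filter] at hp hp'
    exact absurd hp.2.2.2.2.2.2 (not_lt.2 (le_of_lt hp'.2.2.2.2.2.2))
  rw [← Finset.card_union_of_disjoint hd1, ← Finset.card_union_of_disjoint hd2,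
    ← Finset.filter_or, ← Finset.filter_or]
  refine Finset.card_nbij'
    (fun t => (blockOf P t.1, blockOf P j))
    (fun p => if nxt p.1 j < nxt p.2 j then (prv p.1 j, nxt p.1 j, nxt p.2 j)
      else (prv p.1 j, nxt p.2 j, nxt p.1 j)) ?_ ?_ ?_ ?_
  · -- forward maps into ov ∪ cov
    intro t ht
    rw [Finset.mem_coe, mem_filter] at ht ⊢
    refine ⟨mem_univ _, ?_⟩
    dsimp only
    rcases ht.2 with hc | hc
    · obtain ⟨h1t, h2t, h3t, hik, hjl⟩ := hc
      obtain ⟨hik', B1, hB1, hiB1, hkB1, hbet1⟩ := id hik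
      obtain ⟨hjl', B2, hB2, hjB2, hlB2, hbet2⟩ := id hjl
      have e1 : blockOf P t.1 = B1 := blockOf_eq hdisj hB1 hiB1
      have e2 : blockOf P j = B2 := blockOf_eq hdisj hB2 hjB2
      have hjB1 : j ∉ B1 := fun hmem => hbet1 j hmem ⟨h1t, h2t⟩
      have hB12 : B1 ≠ B2 := fun he => hjB1 (he ▸ hjB2)
      have hbm : bmin B1 < (j : ℕ) := lt_of_le_of_lt (bmin_le hiB1) h1t
      have hjk : (j : ℕ) < bmax B1 := lt_of_lt_of_le h2t (le_bmax hkB1)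
      have hjl2 : (j : ℕ) < bmax B2 :=
        lt_of_lt_of_le (lt_trans h2t h3t : j < t.2.2) (le_bmax hlB2)
      have hmaxne : bmax B1 ≠ bmax B2 := fun h =>
        hB12 (eq_of_bmax_eq hdisj hB1 hB2 ⟨_, hiB1⟩ ⟨_, hjB2⟩ h)
      rcases hmaxne.lt_or_gt with h | h
      · exact Or.inl (by rw [e1, e2]; exact ⟨hB1, hB2, hjB2, hbm, hjk, h⟩)
      · exact Or.inr (by rw [e1, e2]; exact ⟨hB1, hB2, hjB2, hbm, hjl2, h⟩)
    · obtain ⟨h1t, h2t, h3t, hil, hjk⟩ := hc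
      obtain ⟨hil', B1, hB1, hiB1, hlB1, hbet1⟩ := id hil
      obtain ⟨hjk', B2, hB2, hjB2, hkB2, hbet2⟩ := id hjk
      have e1 : blockOf P t.1 = B1 := blockOf_eq hdisj hB1 hiB1
      have e2 : blockOf P j = B2 := blockOf_eq hdisj hB2 hjB2
      have hjB1 : j ∉ B1 := fun hmem => hbet1 j hmem ⟨h1t, lt_trans h2t h3t⟩
      have hB12 : B1 ≠ B2 := fun he => hjB1 (he ▸ hjB2)
      have hbm : bmin B1 < (j : ℕ) := lt_of_le_of_lt (bmin_le hiB1) h1t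
      have hjl2 : (j : ℕ) < bmax B1 :=
        lt_of_lt_of_le (lt_trans h2t h3t : j < t.2.2) (le_bmax hlB1)
      have hjk2 : (j : ℕ) < bmax B2 := lt_of_lt_of_le h2t (le_bmax hkB2)
      have hmaxne : bmax B1 ≠ bmax B2 := fun h =>
        hB12 (eq_of_bmax_eq hdisj hB1 hB2 ⟨_, hiB1⟩ ⟨_, hjB2⟩ h)
      rcases hmaxne.lt_or_gt with h | h
      · exact Or.inl (by rw [e1, e2]; exact ⟨hB1, hB2, hjB2, hbm, hjl2, h⟩)
      · exact Or.inr (by rw [e1, e2]; exact ⟨hB1, hB2, hjB2, hbm, hjk2, h⟩)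
  · -- backward maps into cr ∪ ne
    intro p hp
    rw [Finset.mem_coe, mem_filter] at hp ⊢
    refine ⟨mem_univ _, ?_⟩
    dsimp only
    have hB1 : p.1 ∈ P := by rcases hp.2 with h | h <;> exact h.1
    have hB2 : p.2 ∈ P := by rcases hp.2 with h | h <;> exact h.2.1
    have hjp2 : j ∈ p.2 := by rcases hp.2 with h | h <;> exact h.2.2.1
    have hminlt : bmin p.1 < (j : ℕ) := by rcases hp.2 with h | h <;> exact h.2.2.2.1
    have hjmax1 : (j : ℕ) < bmax p.1 := by
      rcases hp.2 with h | h
      · exact h.2.2.2.2.1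
      · exact lt_trans h.2.2.2.2.1 h.2.2.2.2.2
    have hjmax2 : (j : ℕ) < bmax p.2 := by
      rcases hp.2 with h | h
      · exact lt_trans h.2.2.2.2.1 h.2.2.2.2.2
      · exact h.2.2.2.2.1
    have hmaxne : bmax p.1 ≠ bmax p.2 := by
      rcases hp.2 with h | h
      · exact ne_of_lt h.2.2.2.2.2
      · exact (ne_of_lt h.2.2.2.2.2).symm
    have hB1ne : p.1.Nonempty := hne _ hB1
    have hB2ne : p.2.Nonempty := hne _ hB2
    have hB12 : p.1 ≠ p.2 := fun h => hmaxne (by rw [h])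
    have hjB1 : j ∉ p.1 := fun hj1 => hB12 (hdisj _ hB1 _ hB2 j hj1 hjp2)
    have hlo : ∃ a ∈ p.1, a < j := by
      obtain ⟨a, haB, hav⟩ := exists_bmin hB1ne
      exact ⟨a, haB, by rw [Fin.lt_def]; omega⟩
    have hhi : ∃ b ∈ p.1, j < b := by
      obtain ⟨b, hbB, hbv⟩ := exists_bmax hB1ne
      exact ⟨b, hbB, by rw [Fin.lt_def]; omega⟩
    have hspan := span_arc hB1 hjB1 hlo hhi
    have hup2 : ∃ x ∈ p.2, j < x := by
      obtain ⟨b, hbB, hbv⟩ := exists_bmax hB2ne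
      exact ⟨b, hbB, by rw [Fin.lt_def]; omega⟩
    have hnxt2 := nxt_mem_arc hB2 hjp2 hup2
    have hbm : nxt p.1 j ≠ nxt p.2 j := fun h =>
      hB12 (hdisj _ hB1 _ hB2 _ hspan.2.2.2.1 (h ▸ hnxt2.1))
    rcases hbm.lt_or_gt with hlt | hlt
    · rw [if_pos hlt]
      exact Or.inl ⟨hspan.2.1, hspan.2.2.1, hlt, hspan.2.2.2.2, hnxt2.2.2⟩
    · rw [if_neg (not_lt.2 (le_of_lt hlt))]
      exact Or.inr ⟨hspan.2.1, hnxt2.2.1, hlt, hspan.2.2.2.2, hnxt2.2.2⟩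
  · -- left inverse
    intro t ht
    rw [Finset.mem_coe, mem_filter] at ht
    dsimp only
    rcases ht.2 with hc | hc
    · obtain ⟨h1t, h2t, h3t, hik, hjl⟩ := hc
      obtain ⟨hik', B1, hB1, hiB1, hkB1, hbet1⟩ := id hik
      obtain ⟨hjl', B2, hB2, hjB2, hlB2, hbet2⟩ := id hjl
      rw [blockOf_eq hdisj hB1 hiB1, blockOf_eq hdisj hB2 hjB2]
      have hsp := span_unique hdisj hB1 hik hiB1 h1t h2t
      have hn2 := (arc_eq_nxt hdisj hB2 hjB2 hjl).2
      rw [hsp.1, hsp.2, hn2, if_pos h3t]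
    · obtain ⟨h1t, h2t, h3t, hil, hjk⟩ := hc
      obtain ⟨hil', B1, hB1, hiB1, hlB1, hbet1⟩ := id hil
      obtain ⟨hjk', B2, hB2, hjB2, hkB2, hbet2⟩ := id hjk
      rw [blockOf_eq hdisj hB1 hiB1, blockOf_eq hdisj hB2 hjB2]
      have hsp := span_unique hdisj hB1 hil hiB1 h1t (lt_trans h2t h3t)
      have hn2 := (arc_eq_nxt hdisj hB2 hjB2 hjk).2
      rw [hsp.1, hsp.2, hn2, if_neg (not_lt.2 (le_of_lt h3t))]
  · -- right inverse
    intro p hp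
    rw [Finset.mem_coe, mem_filter] at hp
    dsimp only
    have hB1 : p.1 ∈ P := by rcases hp.2 with h | h <;> exact h.1
    have hB2 : p.2 ∈ P := by rcases hp.2 with h | h <;> exact h.2.1
    have hjp2 : j ∈ p.2 := by rcases hp.2 with h | h <;> exact h.2.2.1
    have hminlt : bmin p.1 < (j : ℕ) := by rcases hp.2 with h | h <;> exact h.2.2.2.1
    have hjmax1 : (j : ℕ) < bmax p.1 := by
      rcases hp.2 with h | h
      · exact h.2.2.2.2.1
      · exact lt_trans h.2.2.2.2.1 h.2.2.2.2.2
    have hmaxne : bmax p.1 ≠ bmax p.2 := by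
      rcases hp.2 with h | h
      · exact ne_of_lt h.2.2.2.2.2
      · exact (ne_of_lt h.2.2.2.2.2).symm
    have hB1ne : p.1.Nonempty := hne _ hB1
    have hB12 : p.1 ≠ p.2 := fun h => hmaxne (by rw [h])
    have hjB1 : j ∉ p.1 := fun hj1 => hB12 (hdisj _ hB1 _ hB2 j hj1 hjp2)
    have hlo : ∃ a ∈ p.1, a < j := by
      obtain ⟨a, haB, hav⟩ := exists_bmin hB1ne
      exact ⟨a, haB, by rw [Fin.lt_def]; omega⟩
    have hhi : ∃ b ∈ p.1, j < b := by
      obtain ⟨b, hbB, hbv⟩ := exists_bmax hB1ne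
      exact ⟨b, hbB, by rw [Fin.lt_def]; omega⟩
    have hspan := span_arc hB1 hjB1 hlo hhi
    have hfst : (if nxt p.1 j < nxt p.2 j then (prv p.1 j, nxt p.1 j, nxt p.2 j)
        else (prv p.1 j, nxt p.2 j, nxt p.1 j)).1 = prv p.1 j := by
      split <;> rfl
    rw [hfst, blockOf_eq hdisj hB1 hspan.1, blockOf_eq hdisj hB2 hjp2]

/-- Splitting a quadruple count according to the second coordinate. -/
lemma quad_split (C : Fin n → Fin n → Fin n → Fin n → Prop) (Q : Fin n → Prop)
    [DecidablePred Q] :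
    quad (fun i j k l => C i j k l ∧ Q j) =
      ∑ j ∈ Finset.univ.filter Q, Nat.card {t : Fin n × Fin n × Fin n //
        t.1 < j ∧ j < t.2.1 ∧ t.2.1 < t.2.2 ∧ C t.1 j t.2.1 t.2.2} := by
  classical
  rw [quad, ncard_subtype]
  rw [Finset.card_eq_sum_card_fiberwise
    (f := fun q : Fin n × Fin n × Fin n × Fin n => q.2.1) (t := Finset.univ)
    (fun _ _ => Finset.mem_univ _)]
  rw [← Finset.sum_subset (Finset.filter_subset Q Finset.univ) ?_]
  · refine Finset.sum_congr rfl fun j0 hj0 => ?_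
    rw [ncard_subtype]
    refine Finset.card_nbij' (fun q => (q.1, q.2.2.1, q.2.2.2)) (fun t => (t.1, j0, t.2.1, t.2.2))
      ?_ ?_ ?_ ?_
    · intro q hq
      rw [Finset.mem_coe, mem_filter] at hq
      rw [mem_filter] at hq
      obtain ⟨⟨_, h1, h2, h3, hC, hQ⟩, he⟩ := hq
      subst he
      exact mem_filter.2 ⟨mem_univ _, h1, h2, h3, hC⟩
    · intro t ht
      rw [Finset.mem_coe, mem_filter] at ht
      obtain ⟨_, h1, h2, h3, hC⟩ := ht
      rw [Finset.mem_coe, mem_filter, mem_filter]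
      rw [mem_filter] at hj0
      exact ⟨⟨mem_univ _, h1, h2, h3, hC, hj0.2⟩, rfl⟩
    · intro q hq
      rw [Finset.mem_coe, mem_filter] at hq
      obtain ⟨-, he⟩ := hq
      dsimp only
      rw [← he]
    · intro t _
      rfl
  · intro j0 _ hj0
    rw [Finset.card_eq_zero, Finset.filter_eq_empty_iff]
    intro q hq
    rw [mem_filter] at hq
    intro he
    rw [mem_filter] at hj0
    exact hj0 ⟨mem_univ _, he ▸ hq.2.2.2.2.2⟩

/-- A fiberwise counting principle. -/
lemma card_fib {α β : Type*} [DecidableEq α] [DecidableEq β] {s : Finset α} {t : Finset β}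
    (F : α → β → Prop) [∀ a b, Decidable (F a b)]
    (hex : ∀ a ∈ s, ∃ b ∈ t, F a b)
    (huq : ∀ a ∈ s, ∀ b ∈ t, ∀ b' ∈ t, F a b → F a b' → b = b') :
    s.card = ∑ b ∈ t, (s.filter fun a => F a b).card := by
  rw [← Finset.card_biUnion]
  · congr 1
    ext a
    simp only [Finset.mem_biUnion, Finset.mem_filter]
    constructor
    · intro ha; obtain ⟨b, hb, hf⟩ := hex a ha; exact ⟨b, hb, ha, hf⟩
    · rintro ⟨b, _, ha, _⟩; exact ha
  · intro b hb b' hb' hbne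
    rw [Function.onFun, Finset.disjoint_left]
    intro a ha ha'
    rw [Finset.mem_filter] at ha ha'
    exact hbne (huq a ha.1 b hb b' hb' ha.2 ha'.2)

/-- Splitting a pair-of-blocks count according to the opener of the second block. -/
lemma split_pairs (hne : ∀ B ∈ P, B.Nonempty)
    (hdisj : ∀ B ∈ P, ∀ C ∈ P, ∀ i : Fin n, i ∈ B → i ∈ C → B = C)
    (R : Finset (Fin n) × Finset (Fin n) → ℕ → Prop)
    (hR : ∀ p m, R p m → m < bmax p.2) :
    Nat.card {p : Finset (Fin n) × Finset (Fin n) // p.1 ∈ P ∧ p.2 ∈ P ∧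
        bmin p.1 < bmin p.2 ∧ R p (bmin p.2)} =
      ∑ j ∈ Finset.univ.filter (isOpener P),
        Nat.card {p : Finset (Fin n) × Finset (Fin n) // p.1 ∈ P ∧ p.2 ∈ P ∧ j ∈ p.2 ∧
          bmin p.1 < (j : ℕ) ∧ R p (j : ℕ)} := by
  classical
  have hkey : ∀ p : Finset (Fin n) × Finset (Fin n),
      (p.1 ∈ P ∧ p.2 ∈ P ∧ bmin p.1 < bmin p.2 ∧ R p (bmin p.2)) →
      ∃ j : Fin n, isOpener P j ∧ j ∈ p.2 ∧ (j : ℕ) = bmin p.2 := by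
    intro p hp
    obtain ⟨hB1, hB2, hlt, hRp⟩ := hp
    have hminmax : bmin p.2 < bmax p.2 := hR p _ hRp
    have hB2ne : p.2.Nonempty := hne _ hB2
    obtain ⟨a, haB, hav⟩ := exists_bmin hB2ne
    obtain ⟨b, hbB, hbv⟩ := exists_bmax hB2ne
    have hab : a ≠ b := fun h => by rw [h] at hav; omega
    refine ⟨a, ⟨p.2, hB2, haB, ?_, ?_⟩, haB, hav⟩
    · exact Finset.one_lt_card.2 ⟨a, haB, b, hbB, hab⟩
    · intro x hx
      have := bmin_le hx
      rw [Fin.le_def]; omega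
  rw [ncard_subtype]
  have hex : ∀ p ∈ Finset.univ.filter (fun p : Finset (Fin n) × Finset (Fin n) =>
      p.1 ∈ P ∧ p.2 ∈ P ∧ bmin p.1 < bmin p.2 ∧ R p (bmin p.2)),
      ∃ j ∈ Finset.univ.filter (isOpener P), j ∈ p.2 := by
    intro p hp
    rw [mem_filter] at hp
    obtain ⟨j, hj1, hj2, _⟩ := hkey p hp.2
    exact ⟨j, mem_filter.2 ⟨mem_univ _, hj1⟩, hj2⟩
  have huq : ∀ p ∈ Finset.univ.filter (fun p : Finset (Fin n) × Finset (Fin n) =>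
      p.1 ∈ P ∧ p.2 ∈ P ∧ bmin p.1 < bmin p.2 ∧ R p (bmin p.2)),
      ∀ b ∈ Finset.univ.filter (isOpener P), ∀ b' ∈ Finset.univ.filter (isOpener P),
      b ∈ p.2 → b' ∈ p.2 → b = b' := by
    intro p hp b hb b' hb' hF hF'
    rw [mem_filter] at hp hb hb'
    obtain ⟨B, hBmem, hbB, -, hmin⟩ := hb.2
    obtain ⟨B', hB'mem, hbB', -, hmin'⟩ := hb'.2
    have hB2 : p.2 ∈ P := hp.2.2.1
    have e1 : B = p.2 := hdisj _ hBmem _ hB2 b hbB hF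
    have e2 : B' = p.2 := hdisj _ hB'mem _ hB2 b' hbB' hF'
    subst e1; subst e2
    exact le_antisymm (hmin b' hF') (hmin' b hF)
  rw [card_fib (fun (p : Finset (Fin n) × Finset (Fin n)) (j : Fin n) => j ∈ p.2) hex huq]
  refine Finset.sum_congr rfl fun j0 hj0 => ?_
  rw [mem_filter] at hj0
  obtain ⟨B0, hB0, hj0B0, hcard0, hmin0⟩ := hj0.2
  rw [ncard_subtype]
  congr 1
  ext p
  rw [mem_filter, mem_filter, mem_filter]
  constructor
  · rintro ⟨⟨-, hB1, hB2, hlt, hRp⟩, hjp2⟩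
    have hBB : B0 = p.2 := hdisj _ hB0 _ hB2 j0 hj0B0 hjp2
    subst hBB
    have h1 := bmin_le hjp2
    obtain ⟨a, haB, hav⟩ := exists_bmin (hne _ hB2)
    have h2 := hmin0 a haB
    rw [Fin.le_def] at h2
    have hminj : bmin p.2 = (j0 : ℕ) := by omega
    exact ⟨mem_univ _, hB1, hB2, hjp2, by omega, by rw [← hminj]; exact hRp⟩
  · rintro ⟨-, hB1, hB2, hjp2, hlt, hRp⟩
    have hBB : B0 = p.2 := hdisj _ hB0 _ hB2 j0 hj0B0 hjp2
    subst hBB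
    have h1 := bmin_le hjp2
    obtain ⟨a, haB, hav⟩ := exists_bmin (hne _ hB2)
    have h2 := hmin0 a haB
    rw [Fin.le_def] at h2
    have hminj : bmin p.2 = (j0 : ℕ) := by omega
    exact ⟨⟨mem_univ _, hB1, hB2, by omega, by rw [hminj]; exact hRp⟩, hjp2⟩

lemma quad_congr {C C' : Fin n → Fin n → Fin n → Fin n → Prop}
    (h : ∀ i j k l, C i j k l ↔ C' i j k l) : quad C = quad C' := by
  unfold quad
  exact Nat.card_congr (Equiv.subtypeEquivRight fun q =>
    and_congr_right fun _ => and_congr_right fun _ => and_congr_right fun _ => h _ _ _ _)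

end Aux

open Classical in
/-- Lemma 3.5 of Sokal–Zeng:
crossings + nestings = overlaps + coverings. -/
theorem statement17 (n : ℕ) (P : Finset (Finset (Fin n)))
    (hP : P ∈ setPartitions n) :
    cropP P + neopP P = ovP P + covP P ∧ crinP P + neinP P = ovinP P + covinP P := by
  classical
  rw [setPartitions, Finset.mem_filter] at hP
  obtain ⟨-, hne, -, hdisj⟩ := hP
  have ecrop : cropP P = ∑ j ∈ Finset.univ.filter (isOpener P), crAt P j := by
    rw [cropP, quad_congr (C' := fun i j k l => (arc P i k ∧ arc P j l) ∧ isOpener P j)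
      (fun i j k l => by tauto)]
    exact quad_split (fun i j k l => arc P i k ∧ arc P j l) (isOpener P)
  have eneop : neopP P = ∑ j ∈ Finset.univ.filter (isOpener P), neAt P j := by
    rw [neopP, quad_congr (C' := fun i j k l => (arc P i l ∧ arc P j k) ∧ isOpener P j)
      (fun i j k l => by tauto)]
    exact quad_split (fun i j k l => arc P i l ∧ arc P j k) (isOpener P)
  have ecrin : crinP P = ∑ j ∈ Finset.univ.filter (isInsider P), crAt P j := by
    rw [crinP, quad_congr (C' := fun i j k l => (arc P i k ∧ arc P j l) ∧ isInsider P j)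
      (fun i j k l => by tauto)]
    exact quad_split (fun i j k l => arc P i k ∧ arc P j l) (isInsider P)
  have enein : neinP P = ∑ j ∈ Finset.univ.filter (isInsider P), neAt P j := by
    rw [neinP, quad_congr (C' := fun i j k l => (arc P i l ∧ arc P j k) ∧ isInsider P j)
      (fun i j k l => by tauto)]
    exact quad_split (fun i j k l => arc P i l ∧ arc P j k) (isInsider P)
  have eov : ovP P = ∑ j ∈ Finset.univ.filter (isOpener P), ovAt P j := by
    rw [ovP]
    exact split_pairs hne hdisj (fun p m => m < bmax p.1 ∧ bmax p.1 < bmax p.2)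
      (fun p m hm => lt_trans hm.1 hm.2)
  have ecov : covP P = ∑ j ∈ Finset.univ.filter (isOpener P), covAt P j := by
    rw [covP]
    exact split_pairs hne hdisj (fun p m => m < bmax p.2 ∧ bmax p.2 < bmax p.1)
      (fun p m hm => hm.1)
  constructor
  · rw [ecrop, eneop, eov, ecov, ← Finset.sum_add_distrib, ← Finset.sum_add_distrib]
    exact Finset.sum_congr rfl fun j _ => key_at hne hdisj j
  · rw [ecrin, enein, ovinP, covinP, ← Finset.sum_add_distrib, ← Finset.sum_add_distrib]
    exact Finset.sum_congr rfl fun j _ => key_at hne hdisj j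

end Paper
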